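/- In the category of V-categories over a unital integral quantale V, the regular monomorphisms are closed under pushout along arbitrary morphisms. Concretely: given a V-functor f : X → Y and a fully faithful injective V-functor (isometric embedding) m : X ↪ Z, the pushout W = (Y + Z)/∼ (identifying m(x) with f(x)), equipped with W([y],[y']) = Y(y,y') ∨ ⋁{Z(x,x') : x ∼ y, x' ∼ y'}, satisfies W([y],[y']) = Y(y,y') for all y,y' ∈ Y; hence the induced map Y → W is a fully faithful injective V-functor. -/
import Mathlib


/-- Pushouts in `V`-Cat preserve regular monomorphisms: given a `V`-functor
`f : X → Y` and an isometric embedding `m : X ↪ Z`, the pushout structure on the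
copy of `Y` inside `W = (Y + Z)/∼` agrees with that of `Y`. -/
theorem VCat_pushout_of_regular_mono {V : Type*} [CompleteLattice V] [Monoid V]
    (hone : (1 : V) = ⊤)
    (hdistl : ∀ (a : V) (s : Set V), a * sSup s = ⨆ b ∈ s, a * b)
    (hdistr : ∀ (a : V) (s : Set V), sSup s * a = ⨆ b ∈ s, b * a)
    {X Y Z : Type*} (dX : X → X → V) (dY : Y → Y → V) (dZ : Z → Z → V)
    (hXrefl : ∀ x : X, ⊤ ≤ dX x x) (hXtrans : ∀ x y z : X, dX x y * dX y z ≤ dX x z)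
    (hYrefl : ∀ x : Y, ⊤ ≤ dY x x) (hYtrans : ∀ x y z : Y, dY x y * dY y z ≤ dY x z)
    (hZrefl : ∀ x : Z, ⊤ ≤ dZ x x) (hZtrans : ∀ x y z : Z, dZ x y * dZ y z ≤ dZ x z)
    (f : X → Y) (hf : ∀ x x' : X, dX x x' ≤ dY (f x) (f x'))
    (m : X → Z) (hminj : Function.Injective m)
    (hmreg : ∀ x x' : X, dX x x' = dZ (m x) (m x')) :
    ∀ y y' : Y,
      dY y y' ⊔ (⨆ x : X, ⨆ x' : X, ⨆ _ : f x = y, ⨆ _ : f x' = y', dZ (m x) (m x'))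
        = dY y y' := by
  intro y y'
  refine sup_eq_left.2 (iSup_le fun x => iSup_le fun x' => iSup_le fun hx => iSup_le fun hx' => ?_)
  rw [← hmreg]
  subst hx hx'
  exact hf x x'
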